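/- (Corollary 1.5(2), twisted case; eq. (1.39), equivalently (1.45).) Let l be a natural number. In the formal power series ring ℚ[[x₁, …, x₄, y₁, …, y_l, u]], the homogeneous component of total degree 4 of exp((1/24)·(Σ_{j=1}^{4} xⱼ² - Σ_{k=1}^{l} yₖ²)) · [ Π_{j=1}^{4} A(xⱼ) · Π_{k=1}^{l} 2cosh(yₖ/2) · cosh(u/2)^{-2} - Π_{j=1}^{4} A(xⱼ) · cosh(u/2) · ( -2^{l-4}·Σ_{k=1}^{l}(e^{yₖ} + e^{-yₖ}) + 2^{l-3}·(l+8) + 3·2^{l-4}·(e^{u} + e^{-u} - 2) ) ] equals 0. (This is the Chern-root form of the twisted 8-dimensional generalized anomaly cancellation formula (1.45), with no condition on first Pontryagin forms.) -/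

import Mathlib

open MvPowerSeries

/-- Formal exponential of a multivariate power series (with zero constant term):
the coefficient of a monomial `m` in `exp S` is `Σ_k coeff m (S^k) / k!`. -/
noncomputable def mexp {σ : Type*} (S : MvPowerSeries σ ℚ) : MvPowerSeries σ ℚ :=
  fun m => ∑ k ∈ Finset.range ((m.sum fun _ e => e) + 1),
    ((k.factorial : ℚ))⁻¹ * MvPowerSeries.coeff (R := ℚ) m (S ^ k)

/-- Formal hyperbolic cosine: `cosh S = (exp S + exp (-S)) / 2`. -/
noncomputable def mcosh {σ : Type*} (S : MvPowerSeries σ ℚ) : MvPowerSeries σ ℚ :=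
  (2 : ℚ)⁻¹ • (mexp S + mexp (-S))

set_option linter.unusedSectionVars false

noncomputable section


variable {σ : Type*} [DecidableEq σ]

/-- Embedding of a one-variable power series as a multivariate one in variable `i`. -/
def sv (i : σ) (f : PowerSeries ℚ) : MvPowerSeries σ ℚ :=
  fun m => if m = Finsupp.single i (m i) then PowerSeries.coeff (R := ℚ) (m i) f else 0

lemma coeff_sv (i : σ) (f : PowerSeries ℚ) (m : σ →₀ ℕ) :
    MvPowerSeries.coeff (R := ℚ) m (sv i f)
      = if m = Finsupp.single i (m i) then PowerSeries.coeff (R := ℚ) (m i) f else 0 := rfl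

lemma coeff_sv_single (i : σ) (f : PowerSeries ℚ) (n : ℕ) :
    MvPowerSeries.coeff (R := ℚ) (Finsupp.single i n) (sv i f) = PowerSeries.coeff (R := ℚ) n f := by
  rw [coeff_sv]
  simp

lemma eq_single_iff {m : σ →₀ ℕ} {i : σ} :
    m = Finsupp.single i (m i) ↔ ∀ j, j ≠ i → m j = 0 := by
  constructor
  · intro h j hj
    conv_lhs => rw [h]
    exact Finsupp.single_eq_of_ne' (Ne.symm hj)
  · intro h
    ext j
    rcases eq_or_ne j i with rfl | hj
    · simp
    · rw [h j hj, Finsupp.single_eq_of_ne' (Ne.symm hj)]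

lemma sv_one (i : σ) : sv i (1 : PowerSeries ℚ) = 1 := by
  ext m
  rw [coeff_sv, MvPowerSeries.coeff_one]
  rcases eq_or_ne m 0 with rfl | hm
  · simp
  · rw [if_neg hm]
    by_cases h : m = Finsupp.single i (m i)
    · rw [if_pos h]
      have hmi : m i ≠ 0 := by
        intro h0
        apply hm
        rw [h, h0, Finsupp.single_zero]
      rw [PowerSeries.coeff_one, if_neg hmi]
    · rw [if_neg h]

lemma sv_add (i : σ) (f g : PowerSeries ℚ) : sv i (f + g) = sv i f + sv i g := by
  ext m
  rw [map_add, coeff_sv, coeff_sv, coeff_sv, map_add]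
  split <;> simp

lemma sv_neg (i : σ) (f : PowerSeries ℚ) : sv i (-f) = -(sv i f) := by
  ext m
  rw [map_neg, coeff_sv, coeff_sv, map_neg]
  split <;> simp

lemma sv_sub (i : σ) (f g : PowerSeries ℚ) : sv i (f - g) = sv i f - sv i g := by
  rw [sub_eq_add_neg, sv_add, sv_neg, sub_eq_add_neg]

lemma sv_smul (i : σ) (c : ℚ) (f : PowerSeries ℚ) : sv i (c • f) = c • sv i f := by
  ext m
  rw [map_smul, coeff_sv, coeff_sv, map_smul]
  split <;> simp

lemma sv_mul (i : σ) (f g : PowerSeries ℚ) : sv i (f * g) = sv i f * sv i g := by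
  ext m
  rw [MvPowerSeries.coeff_mul]
  by_cases h : m = Finsupp.single i (m i)
  · rw [coeff_sv, if_pos h, PowerSeries.coeff_mul]
    conv_rhs => rw [h]
    rw [Finsupp.antidiagonal_single, Finset.sum_map]
    apply Finset.sum_congr rfl
    intro p _
    simp only [Function.Embedding.coe_prodMap, Function.Embedding.coeFn_mk, Prod.map_apply]
    rw [coeff_sv, coeff_sv]
    simp
  · rw [coeff_sv, if_neg h]
    symm
    apply Finset.sum_eq_zero
    intro p hp
    rw [Finset.HasAntidiagonal.mem_antidiagonal] at hp
    obtain ⟨j, hj, hmj⟩ : ∃ j, j ≠ i ∧ m j ≠ 0 := by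
      by_contra hc
      push_neg at hc
      exact h (eq_single_iff.mpr fun j hj => hc j hj)
    have : p.1 j ≠ 0 ∨ p.2 j ≠ 0 := by
      by_contra hc
      push_neg at hc
      apply hmj
      rw [← hp]
      simp [Finsupp.add_apply, hc.1, hc.2]
    rcases this with h1 | h2
    · have : p.1 ≠ Finsupp.single i (p.1 i) := by
        intro he
        exact h1 (eq_single_iff.mp he j hj)
      rw [coeff_sv, if_neg this, zero_mul]
    · have : p.2 ≠ Finsupp.single i (p.2 i) := by
        intro he
        exact h2 (eq_single_iff.mp he j hj)
      rw [coeff_sv (f := g), if_neg this, mul_zero]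

lemma sv_pow (i : σ) (f : PowerSeries ℚ) (n : ℕ) : sv i (f ^ n) = sv i f ^ n := by
  induction n with
  | zero => simpa using sv_one i
  | succ n ih => rw [pow_succ, pow_succ, sv_mul, ih]

lemma sv_C (i : σ) (c : ℚ) : sv i (PowerSeries.C (R := ℚ) c) = MvPowerSeries.C (σ := σ) (R := ℚ) c := by
  ext m
  rw [coeff_sv, MvPowerSeries.coeff_C]
  by_cases hm : m = 0
  · subst hm; simp
  · rw [if_neg hm]
    by_cases h : m = Finsupp.single i (m i)
    · rw [if_pos h]
      have hmi : m i ≠ 0 := fun h0 => hm (by rw [h, h0, Finsupp.single_zero])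
      rw [PowerSeries.coeff_C, if_neg hmi]
    · rw [if_neg h]

lemma sv_X (i : σ) : sv i (PowerSeries.X : PowerSeries ℚ) = MvPowerSeries.X i := by
  ext m
  rw [coeff_sv, MvPowerSeries.coeff_X]
  by_cases h : m = Finsupp.single i (m i)
  · rw [if_pos h, PowerSeries.coeff_X]
    by_cases h1 : m i = 1
    · rw [if_pos h1, if_pos (by rw [h, h1])]
    · rw [if_neg h1, if_neg (fun he => h1 (by rw [he]; simp))]
  · rw [if_neg h, if_neg (fun he => h (by rw [he]; simp))]

lemma constantCoeff_sv (i : σ) (f : PowerSeries ℚ) :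
    MvPowerSeries.constantCoeff (σ := σ) (R := ℚ) (sv i f) = PowerSeries.constantCoeff (R := ℚ) f := by
  have : MvPowerSeries.constantCoeff (σ := σ) (R := ℚ) (sv i f) = MvPowerSeries.coeff (R := ℚ) 0 (sv i f) := by
    simp [MvPowerSeries.coeff_zero_eq_constantCoeff]
  rw [this, coeff_sv]
  simp [PowerSeries.coeff_zero_eq_constantCoeff]

open scoped Classical in
/-- Master lemma: coefficient of a product of single-variable series in distinct variables. -/
lemma coeff_prod_sv (s : Finset σ) (F : σ → PowerSeries ℚ) (m : σ →₀ ℕ) :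
    MvPowerSeries.coeff (R := ℚ) m (∏ v ∈ s, sv v (F v))
      = if ∀ j ∉ s, m j = 0 then ∏ v ∈ s, PowerSeries.coeff (R := ℚ) (m v) (F v) else 0 := by
  classical
  induction s using Finset.induction generalizing m with
  | empty =>
    simp only [Finset.prod_empty, MvPowerSeries.coeff_one]
    by_cases h : m = 0
    · subst h; simp
    · rw [if_neg h, if_neg]
      intro hc
      exact h (Finsupp.ext fun j => hc j (Finset.notMem_empty j))
  | @insert i s hi ih =>
    rw [Finset.prod_insert hi, MvPowerSeries.coeff_mul]
    have key : ∀ p ∈ Finset.HasAntidiagonal.antidiagonal m,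
        p ≠ (Finsupp.single i (m i), m.erase i) →
        MvPowerSeries.coeff (R := ℚ) p.1 (sv i (F i)) *
          MvPowerSeries.coeff (R := ℚ) p.2 (∏ v ∈ s, sv v (F v)) = 0 := by
      intro p hp hne
      rw [Finset.HasAntidiagonal.mem_antidiagonal] at hp
      by_cases h1 : p.1 = Finsupp.single i (p.1 i)
      · rw [ih]
        by_cases h2 : ∀ j ∉ s, p.2 j = 0
        · exfalso
          apply hne
          have hp2i : p.2 i = 0 := h2 i hi
          have hp1 : p.1 = Finsupp.single i (m i) := by
            rw [h1]
            congr 1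
            have := DFunLike.congr_fun hp i
            simpa [hp2i] using this
          have hp2 : p.2 = m.erase i := by
            ext j
            rcases eq_or_ne j i with rfl | hj
            · simp [hp2i]
            · rw [Finsupp.erase_ne hj]
              have := DFunLike.congr_fun hp j
              simp only [Finsupp.add_apply] at this
              rw [← this, h1, Finsupp.single_eq_of_ne' (Ne.symm hj), zero_add]
          rw [← hp1, ← hp2]
        · rw [if_neg h2, mul_zero]
      · rw [coeff_sv, if_neg h1, zero_mul]
    rw [Finset.sum_eq_single_of_mem (Finsupp.single i (m i), m.erase i) ?_ key]
    · rw [coeff_sv_single, ih]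
      by_cases hall : ∀ j ∉ insert i s, m j = 0
      · rw [if_pos hall, if_pos, Finset.prod_insert hi]
        · congr 1
          apply Finset.prod_congr rfl
          intro v hv
          rw [Finsupp.erase_ne (fun he : v = i => hi (he ▸ hv))]
        · intro j hj
          rcases eq_or_ne j i with rfl | hji
          · simp
          · rw [Finsupp.erase_ne hji]
            exact hall j (by simp [hji, hj])
      · rw [if_neg hall, if_neg, mul_zero]
        intro hc
        apply hall
        intro j hj
        simp only [Finset.mem_insert, not_or] at hj
        have := hc j hj.2
        rwa [Finsupp.erase_ne hj.1] at this
    · rw [Finset.HasAntidiagonal.mem_antidiagonal]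
      exact Finsupp.single_add_erase i m

/-! ### mexp theory -/

section Mexp

variable {σ : Type*} [DecidableEq σ]

/-- total degree of a monomial -/
def mdeg (m : σ →₀ ℕ) : ℕ := m.sum fun _ e => e

lemma mdeg_def (m : σ →₀ ℕ) : (m.sum fun _ e => e) = mdeg m := rfl


lemma coeff_mexp (S : MvPowerSeries σ ℚ) (m : σ →₀ ℕ) :
    MvPowerSeries.coeff (R := ℚ) m (mexp S)
      = ∑ k ∈ Finset.range (mdeg m + 1),
          ((k.factorial : ℚ))⁻¹ * MvPowerSeries.coeff (R := ℚ) m (S ^ k) := rfl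

lemma mdeg_add (a b : σ →₀ ℕ) : mdeg (a + b) = mdeg a + mdeg b :=
  Finsupp.sum_add_index' (fun _ => rfl) (fun _ _ _ => rfl)

lemma mdeg_eq_zero_iff (a : σ →₀ ℕ) : mdeg a = 0 ↔ a = 0 := by
  rw [show mdeg a = a.degree from rfl, Finsupp.degree_eq_zero_iff]

lemma coeff_pow_eq_zero {S : MvPowerSeries σ ℚ}
    (hS : MvPowerSeries.constantCoeff (σ := σ) (R := ℚ) S = 0) :
    ∀ {k : ℕ} {m : σ →₀ ℕ}, mdeg m < k → MvPowerSeries.coeff (R := ℚ) m (S ^ k) = 0 := by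
  intro k
  induction k with
  | zero => intro m h; omega
  | succ k ih =>
    intro m h
    classical
    rw [pow_succ, MvPowerSeries.coeff_mul]
    apply Finset.sum_eq_zero
    intro p hp
    rw [Finset.HasAntidiagonal.mem_antidiagonal] at hp
    by_cases h2 : p.2 = 0
    · have : MvPowerSeries.coeff (R := ℚ) p.2 S = 0 := by
        rw [h2, MvPowerSeries.coeff_zero_eq_constantCoeff, hS]
      rw [this, mul_zero]
    · have hd2 : 1 ≤ mdeg p.2 := by
        rcases Nat.eq_zero_or_pos (mdeg p.2) with h0 | h0
        · exact absurd ((mdeg_eq_zero_iff p.2).mp h0) h2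
        · exact h0
      have : mdeg p.1 < k := by
        have := mdeg_add p.1 p.2
        rw [hp] at this
        omega
      rw [ih this, zero_mul]

lemma coeff_mul_pow_eq_zero {S T : MvPowerSeries σ ℚ}
    (hS : MvPowerSeries.constantCoeff (σ := σ) (R := ℚ) S = 0)
    (hT : MvPowerSeries.constantCoeff (σ := σ) (R := ℚ) T = 0)
    {j k : ℕ} {m : σ →₀ ℕ} (h : mdeg m < j + k) :
    MvPowerSeries.coeff (R := ℚ) m (S ^ j * T ^ k) = 0 := by
  classical
  rw [MvPowerSeries.coeff_mul]
  apply Finset.sum_eq_zero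
  intro p hp
  rw [Finset.HasAntidiagonal.mem_antidiagonal] at hp
  have hdd : mdeg p.1 + mdeg p.2 = mdeg m := by rw [← mdeg_add, hp]
  by_cases h1 : mdeg p.1 < j
  · rw [coeff_pow_eq_zero hS h1, zero_mul]
  · have : mdeg p.2 < k := by omega
    rw [coeff_pow_eq_zero hT this, mul_zero]

lemma coeff_mexp_ext {S : MvPowerSeries σ ℚ}
    (hS : MvPowerSeries.constantCoeff (σ := σ) (R := ℚ) S = 0) (m : σ →₀ ℕ) {N : ℕ} (hN : mdeg m ≤ N) :
    MvPowerSeries.coeff (R := ℚ) m (mexp S)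
      = ∑ k ∈ Finset.range (N + 1),
          ((k.factorial : ℚ))⁻¹ * MvPowerSeries.coeff (R := ℚ) m (S ^ k) := by
  rw [coeff_mexp]
  apply Finset.sum_subset
  · intro k hk
    rw [Finset.mem_range] at hk ⊢
    omega
  · intro k _ hk
    rw [Finset.mem_range, not_lt] at hk
    rw [coeff_pow_eq_zero hS (by omega), mul_zero]

/-- Auxiliary reindexing: summing over antidiagonals vs over a square. -/
lemma sum_antidiag_square {N : ℕ} (h : ℕ → ℕ → ℚ) (hh : ∀ j k, N < j + k → h j k = 0) :
    ∑ n ∈ Finset.range (N + 1), ∑ p ∈ Finset.HasAntidiagonal.antidiagonal n, h p.1 p.2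
      = ∑ j ∈ Finset.range (N + 1), ∑ k ∈ Finset.range (N + 1), h j k := by
  calc ∑ n ∈ Finset.range (N + 1), ∑ p ∈ Finset.HasAntidiagonal.antidiagonal n, h p.1 p.2
      = ∑ x ∈ (Finset.range (N+1)).sigma (fun n => Finset.HasAntidiagonal.antidiagonal n),
          h x.2.1 x.2.2 :=
        Finset.sum_sigma' _ _ _
    _ = ∑ p ∈ (Finset.range (N+1) ×ˢ Finset.range (N+1)).filter
            (fun p : ℕ × ℕ => p.1 + p.2 ≤ N), h p.1 p.2 := by
        apply Finset.sum_bij' (fun (x : Σ _ : ℕ, ℕ × ℕ) _ => x.2)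
          (fun p _ => (⟨p.1 + p.2, p⟩ : Σ _ : ℕ, ℕ × ℕ))
        · rintro ⟨n, p⟩ ha
          simp only [Finset.mem_sigma, Finset.mem_range, Finset.HasAntidiagonal.mem_antidiagonal] at ha
          simp only [Finset.mem_filter, Finset.mem_product, Finset.mem_range]
          omega
        · rintro ⟨p1, p2⟩ hp
          simp only [Finset.mem_filter, Finset.mem_product, Finset.mem_range] at hp
          refine Finset.mem_sigma.mpr ⟨Finset.mem_range.mpr ?_, Finset.HasAntidiagonal.mem_antidiagonal.mpr rfl⟩
          show p1 + p2 < N + 1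
          omega
        · rintro ⟨n, p⟩ ha
          simp only [Finset.mem_sigma, Finset.mem_range, Finset.HasAntidiagonal.mem_antidiagonal] at ha
          simp only [Sigma.mk.inj_iff, heq_eq_eq, and_true]
          omega
        · rintro ⟨p1, p2⟩ _
          rfl
        · rintro ⟨n, p⟩ _
          rfl
    _ = ∑ p ∈ Finset.range (N+1) ×ˢ Finset.range (N+1), h p.1 p.2 := by
        apply Finset.sum_subset (Finset.filter_subset _ _)
        intro p hp hp2
        simp only [Finset.mem_filter, not_and, not_le] at hp2
        exact hh p.1 p.2 (hp2 hp)
    _ = ∑ j ∈ Finset.range (N + 1), ∑ k ∈ Finset.range (N + 1), h j k :=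
        Finset.sum_product' _ _ _

lemma mexp_add {S T : MvPowerSeries σ ℚ}
    (hS : MvPowerSeries.constantCoeff (σ := σ) (R := ℚ) S = 0)
    (hT : MvPowerSeries.constantCoeff (σ := σ) (R := ℚ) T = 0) :
    mexp (S + T) = mexp S * mexp T := by
  ext m
  set N := mdeg m with hNdef
  -- RHS
  rw [MvPowerSeries.coeff_mul]
  have hR : ∀ p ∈ Finset.HasAntidiagonal.antidiagonal m,
      MvPowerSeries.coeff (R := ℚ) p.1 (mexp S) * MvPowerSeries.coeff (R := ℚ) p.2 (mexp T)
        = ∑ j ∈ Finset.range (N+1), ∑ k ∈ Finset.range (N+1),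
            ((j.factorial : ℚ))⁻¹ * ((k.factorial : ℚ))⁻¹ *
              (MvPowerSeries.coeff (R := ℚ) p.1 (S ^ j) * MvPowerSeries.coeff (R := ℚ) p.2 (T ^ k)) := by
    intro p hp
    rw [Finset.HasAntidiagonal.mem_antidiagonal] at hp
    have hdd : mdeg p.1 + mdeg p.2 = mdeg m := by rw [← mdeg_add, hp]
    rw [coeff_mexp_ext hS p.1 (N := N) (by omega), coeff_mexp_ext hT p.2 (N := N) (by omega),
      Finset.sum_mul_sum]
    apply Finset.sum_congr rfl; intro j _
    apply Finset.sum_congr rfl; intro k _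
    ring
  rw [Finset.sum_congr rfl hR]
  rw [Finset.sum_comm]
  have : ∀ j ∈ Finset.range (N+1),
      (∑ p ∈ Finset.HasAntidiagonal.antidiagonal m, ∑ k ∈ Finset.range (N+1),
        ((j.factorial : ℚ))⁻¹ * ((k.factorial : ℚ))⁻¹ *
          (MvPowerSeries.coeff (R := ℚ) p.1 (S ^ j) * MvPowerSeries.coeff (R := ℚ) p.2 (T ^ k)))
      = ∑ k ∈ Finset.range (N+1),
          ((j.factorial : ℚ))⁻¹ * ((k.factorial : ℚ))⁻¹ *
            MvPowerSeries.coeff (R := ℚ) m (S ^ j * T ^ k) := by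
    intro j _
    rw [Finset.sum_comm]
    apply Finset.sum_congr rfl
    intro k _
    rw [MvPowerSeries.coeff_mul, Finset.mul_sum]
  rw [Finset.sum_congr rfl this]
  -- LHS
  rw [coeff_mexp]
  have hL : ∀ n ∈ Finset.range (N+1),
      ((n.factorial : ℚ))⁻¹ * MvPowerSeries.coeff (R := ℚ) m ((S + T) ^ n)
        = ∑ p ∈ Finset.HasAntidiagonal.antidiagonal n,
            ((p.1.factorial : ℚ))⁻¹ * ((p.2.factorial : ℚ))⁻¹ *
              MvPowerSeries.coeff (R := ℚ) m (S ^ p.1 * T ^ p.2) := by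
    intro n _
    rw [add_pow, map_sum, Finset.mul_sum,
      Finset.Nat.sum_antidiagonal_eq_sum_range_succ_mk]
    apply Finset.sum_congr rfl
    intro q hq
    rw [Finset.mem_range] at hq
    have hq' : q ≤ n := by omega
    have hfac : ((n.factorial : ℚ))⁻¹ * (n.choose q : ℚ)
        = ((q.factorial : ℚ))⁻¹ * (((n - q).factorial : ℚ))⁻¹ := by
      have h1 : (n.choose q) * q.factorial * (n - q).factorial = n.factorial :=
        Nat.choose_mul_factorial_mul_factorial hq'
      have h2 : ((n.choose q : ℚ)) * (q.factorial : ℚ) * ((n - q).factorial : ℚ)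
          = (n.factorial : ℚ) := by exact_mod_cast congrArg (Nat.cast : ℕ → ℚ) h1
      field_simp
      nlinarith [h2]
    have : MvPowerSeries.coeff (R := ℚ) m (S ^ q * T ^ (n - q) * (n.choose q : MvPowerSeries σ ℚ))
        = (n.choose q : ℚ) * MvPowerSeries.coeff (R := ℚ) m (S ^ q * T ^ (n - q)) := by
      rw [← map_natCast (MvPowerSeries.C (σ := σ) (R := ℚ)) (n.choose q), mul_comm,
        MvPowerSeries.coeff_C_mul]
    rw [this]
    rw [← mul_assoc, hfac]
  rw [Finset.sum_congr rfl hL]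
  exact sum_antidiag_square (N := N)
    (fun j k => ((j.factorial : ℚ))⁻¹ * ((k.factorial : ℚ))⁻¹ *
      MvPowerSeries.coeff (R := ℚ) m (S ^ j * T ^ k))
    (fun j k hjk => by
      rw [coeff_mul_pow_eq_zero hS hT (by omega), mul_zero])

lemma mexp_zero : mexp (0 : MvPowerSeries σ ℚ) = 1 := by
  ext m
  rw [coeff_mexp]
  rw [Finset.sum_eq_single 0]
  · simp
  · intro k _ hk
    rw [zero_pow hk]
    simp
  · intro h
    exact absurd (Finset.mem_range.mpr (by omega)) h

lemma mexp_sum {ι : Type*} (s : Finset ι) (T : ι → MvPowerSeries σ ℚ)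
    (h : ∀ i ∈ s, MvPowerSeries.constantCoeff (σ := σ) (R := ℚ) (T i) = 0) :
    mexp (∑ i ∈ s, T i) = ∏ i ∈ s, mexp (T i) := by
  classical
  induction s using Finset.induction with
  | empty => simpa using mexp_zero
  | @insert i s hi ih =>
    rw [Finset.sum_insert hi, Finset.prod_insert hi,
      mexp_add (h i (Finset.mem_insert_self i s))
        (by rw [map_sum]; exact Finset.sum_eq_zero fun j hj =>
              h j (Finset.mem_insert_of_mem hj)),
      ih (fun j hj => h j (Finset.mem_insert_of_mem hj))]

lemma mexp_smul_X_pow (c : ℚ) (i : σ) {d : ℕ} (hd : d ≠ 0) :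
    mexp (c • (MvPowerSeries.X i : MvPowerSeries σ ℚ) ^ d)
      = sv i (PowerSeries.mk fun n =>
          if d ∣ n then c ^ (n / d) * (((n / d).factorial : ℚ))⁻¹ else 0) := by
  ext m
  rw [coeff_mexp, coeff_sv]
  have hterm : ∀ k, MvPowerSeries.coeff (R := ℚ) m ((c • (MvPowerSeries.X i) ^ d) ^ k)
      = c ^ k * (if m = Finsupp.single i (d * k) then 1 else 0) := by
    intro k
    rw [smul_pow, map_smul, smul_eq_mul, ← pow_mul, MvPowerSeries.coeff_X_pow]
  by_cases h : m = Finsupp.single i (m i)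
  · rw [if_pos h, PowerSeries.coeff_mk]
    by_cases hdvd : d ∣ m i
    · rw [if_pos hdvd]
      rw [Finset.sum_eq_single (m i / d)]
      · rw [hterm, if_pos (by rw [Nat.mul_div_cancel' hdvd]; exact h)]
        ring
      · intro k _ hk
        rw [hterm, if_neg, mul_zero, mul_zero]
        intro he
        apply hk
        have : m i = d * k := by conv_lhs => rw [he, Finsupp.single_eq_same]
        rw [this, Nat.mul_div_cancel_left k (Nat.pos_of_ne_zero hd)]
      · intro hmem
        exfalso
        apply hmem
        rw [Finset.mem_range]
        have h1 : m i / d ≤ m i := Nat.div_le_self _ _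
        have h2 : mdeg m = m i := by
          conv_lhs => rw [h]
          exact Finsupp.sum_single_index rfl
        omega
    · rw [if_neg hdvd]
      apply Finset.sum_eq_zero
      intro k _
      rw [hterm, if_neg, mul_zero, mul_zero]
      intro he
      apply hdvd
      have : m i = d * k := by conv_lhs => rw [he, Finsupp.single_eq_same]
      exact ⟨k, this⟩
  · rw [if_neg h]
    apply Finset.sum_eq_zero
    intro k _
    rw [hterm, if_neg, mul_zero, mul_zero]
    intro he
    apply h
    rw [he, Finsupp.single_eq_same]

lemma mexp_smul_X (c : ℚ) (i : σ) :
    mexp (c • (MvPowerSeries.X i : MvPowerSeries σ ℚ))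
      = sv i (PowerSeries.mk fun n => c ^ n * ((n.factorial : ℚ))⁻¹) := by
  have := mexp_smul_X_pow (σ := σ) c i (d := 1) one_ne_zero
  rw [pow_one] at this
  rw [this]
  have hfun : (fun n => if 1 ∣ n then c ^ (n / 1) * (((n / 1).factorial : ℚ))⁻¹ else 0)
      = fun n => c ^ n * ((n.factorial : ℚ))⁻¹ := by
    funext n
    rw [if_pos (one_dvd n), Nat.div_one]
  rw [hfun]

lemma mexp_X (i : σ) :
    mexp (MvPowerSeries.X i : MvPowerSeries σ ℚ)
      = sv i (PowerSeries.mk fun n => ((n.factorial : ℚ))⁻¹) := by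
  have := mexp_smul_X (1 : ℚ) i
  rw [one_smul] at this
  rw [this]
  have hfun : (fun n => (1:ℚ) ^ n * ((n.factorial : ℚ))⁻¹)
      = fun n => ((n.factorial : ℚ))⁻¹ := by
    funext n; rw [one_pow, one_mul]
  rw [hfun]

lemma mexp_neg_X (i : σ) :
    mexp (-(MvPowerSeries.X i : MvPowerSeries σ ℚ))
      = sv i (PowerSeries.mk fun n => (-1 : ℚ) ^ n * ((n.factorial : ℚ))⁻¹) := by
  have := mexp_smul_X (-1 : ℚ) i
  rw [neg_one_smul] at this
  rw [this]

lemma mexp_neg_smul_X (c : ℚ) (i : σ) :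
    mexp (-(c • (MvPowerSeries.X i : MvPowerSeries σ ℚ)))
      = sv i (PowerSeries.mk fun n => (-c) ^ n * ((n.factorial : ℚ))⁻¹) := by
  have := mexp_smul_X (-c) i
  rw [neg_smul] at this
  rw [this]

end Mexp

/-! ### one-variable series and numeric coefficients -/

section OneVar

/-- `e^{cx}` -/
def eS (c : ℚ) : PowerSeries ℚ := PowerSeries.mk fun n => c ^ n * ((n.factorial : ℚ))⁻¹

/-- `e^{cx²}` -/
def gS (c : ℚ) : PowerSeries ℚ :=
  PowerSeries.mk fun n => if 2 ∣ n then c ^ (n / 2) * (((n / 2).factorial : ℚ))⁻¹ else 0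

/-- `2 cosh(x/2)` -/
def tch : PowerSeries ℚ := eS 2⁻¹ + eS (-2⁻¹)
/-- `cosh(x/2)` -/
def csh : PowerSeries ℚ := (2 : ℚ)⁻¹ • tch
/-- `e^x + e^{-x}` -/
def ch2 : PowerSeries ℚ := eS 1 + eS (-1)
/-- `e^x + e^{-x} - 2` -/
def tS : PowerSeries ℚ := ch2 - 2
/-- `2 sinh(x/2)` -/
def snh : PowerSeries ℚ := eS 2⁻¹ - eS (-2⁻¹)
/-- `2 sinh(x/2) / x` -/
def shU : PowerSeries ℚ := PowerSeries.mk fun n => PowerSeries.coeff (R := ℚ) (n + 1) snh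
/-- the Â series `x / (2 sinh(x/2))` -/
def aS : PowerSeries ℚ := shU⁻¹
/-- `cosh(x/2)⁻¹` -/
def icsh : PowerSeries ℚ := csh⁻¹

lemma coeff_eS (c : ℚ) (n : ℕ) :
    PowerSeries.coeff (R := ℚ) n (eS c) = c ^ n * ((n.factorial : ℚ))⁻¹ := by
  rw [eS, PowerSeries.coeff_mk]

lemma coeff_gS (c : ℚ) (n : ℕ) :
    PowerSeries.coeff (R := ℚ) n (gS c)
      = if 2 ∣ n then c ^ (n / 2) * (((n / 2).factorial : ℚ))⁻¹ else 0 := by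
  rw [gS, PowerSeries.coeff_mk]

lemma gS_zero : gS 0 = 1 := by
  ext n
  rw [coeff_gS, PowerSeries.coeff_one]
  rcases n with _ | n
  · simp
  · rw [if_neg (Nat.succ_ne_zero n)]
    by_cases h : 2 ∣ n + 1
    · rcases h with ⟨m, hm⟩
      rw [if_pos ⟨m, hm⟩, hm, Nat.mul_div_cancel_left m (by norm_num),
        zero_pow (by omega), zero_mul]
    · rw [if_neg h]

lemma coeff_two (n : ℕ) :
    PowerSeries.coeff (R := ℚ) n (2 : PowerSeries ℚ) = if n = 0 then 2 else 0 := by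
  rw [show (2 : PowerSeries ℚ) = PowerSeries.C (R := ℚ) 2 from (map_ofNat _ 2).symm,
    PowerSeries.coeff_C]

lemma pmul (f g : PowerSeries ℚ) (n : ℕ) :
    PowerSeries.coeff (R := ℚ) n (f * g)
      = ∑ i ∈ Finset.range (n + 1),
          PowerSeries.coeff (R := ℚ) i f * PowerSeries.coeff (R := ℚ) (n - i) g := by
  rw [PowerSeries.coeff_mul, Finset.Nat.sum_antidiagonal_eq_sum_range_succ_mk]

lemma pinv (φ : PowerSeries ℚ) {n : ℕ} (hn : n ≠ 0) :
    PowerSeries.coeff (R := ℚ) n φ⁻¹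
      = -(PowerSeries.constantCoeff (R := ℚ) φ)⁻¹ *
          ∑ i ∈ Finset.range (n + 1),
            (if n - i < n then
              PowerSeries.coeff (R := ℚ) i φ * PowerSeries.coeff (R := ℚ) (n - i) φ⁻¹ else 0) := by
  rw [PowerSeries.coeff_inv, if_neg hn, Finset.Nat.sum_antidiagonal_eq_sum_range_succ_mk]

-- coefficients of snh, shU
lemma snh_coeff (n : ℕ) : PowerSeries.coeff (R := ℚ) n snh
    = (2⁻¹ : ℚ) ^ n * ((n.factorial : ℚ))⁻¹ - (-2⁻¹ : ℚ) ^ n * ((n.factorial : ℚ))⁻¹ := by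
  rw [snh, map_sub, coeff_eS, coeff_eS]

lemma coeff_shU (n : ℕ) : PowerSeries.coeff (R := ℚ) n shU
    = (2⁻¹ : ℚ) ^ (n+1) * (((n+1).factorial : ℚ))⁻¹
      - (-2⁻¹ : ℚ) ^ (n+1) * (((n+1).factorial : ℚ))⁻¹ := by
  rw [shU, PowerSeries.coeff_mk, snh_coeff]

lemma shU0 : PowerSeries.coeff (R := ℚ) 0 shU = 1 := by rw [coeff_shU]; norm_num
lemma shU1 : PowerSeries.coeff (R := ℚ) 1 shU = 0 := by rw [coeff_shU]; norm_num
lemma shU2 : PowerSeries.coeff (R := ℚ) 2 shU = 1/24 := by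
  rw [coeff_shU]; norm_num [Nat.factorial]
lemma shU3 : PowerSeries.coeff (R := ℚ) 3 shU = 0 := by rw [coeff_shU]; norm_num
lemma shU4 : PowerSeries.coeff (R := ℚ) 4 shU = 1/1920 := by
  rw [coeff_shU]; norm_num [Nat.factorial]

lemma constCoeff_shU : PowerSeries.constantCoeff (R := ℚ) shU = 1 := by
  rw [← PowerSeries.coeff_zero_eq_constantCoeff]; exact shU0

lemma snh_eq : snh = PowerSeries.X * shU := by
  ext n
  rcases n with _ | n
  · rw [PowerSeries.coeff_zero_eq_constantCoeff, map_mul]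
    have h0 : PowerSeries.constantCoeff (R := ℚ) snh = 0 := by
      rw [snh, map_sub, eS, eS, PowerSeries.constantCoeff_mk, PowerSeries.constantCoeff_mk]
      norm_num
    rw [h0, PowerSeries.constantCoeff_X, zero_mul]
  · rw [PowerSeries.coeff_succ_X_mul, shU, PowerSeries.coeff_mk]

lemma shU_mul_aS : shU * aS = 1 :=
  PowerSeries.mul_inv_cancel _ (by rw [constCoeff_shU]; norm_num)

lemma aS_eq : shU⁻¹ = aS := rfl
lemma icsh_eq : csh⁻¹ = icsh := rfl

lemma aS0 : PowerSeries.coeff (R := ℚ) 0 aS = 1 := by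
  rw [aS, PowerSeries.coeff_inv, if_pos rfl, constCoeff_shU]; norm_num
lemma aS1 : PowerSeries.coeff (R := ℚ) 1 aS = 0 := by
  rw [aS, pinv _ one_ne_zero, constCoeff_shU]
  simp only [Finset.sum_range_succ, Finset.sum_range_zero]
  norm_num [shU1, aS_eq, constCoeff_shU]
lemma aS2 : PowerSeries.coeff (R := ℚ) 2 aS = -1/24 := by
  rw [aS, pinv _ two_ne_zero, constCoeff_shU]
  simp only [Finset.sum_range_succ, Finset.sum_range_zero]
  norm_num [shU1, shU2, aS_eq, constCoeff_shU, aS0, aS1]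
lemma aS3 : PowerSeries.coeff (R := ℚ) 3 aS = 0 := by
  rw [aS, pinv _ three_ne_zero, constCoeff_shU]
  simp only [Finset.sum_range_succ, Finset.sum_range_zero]
  norm_num [shU1, shU2, shU3, aS_eq, constCoeff_shU, aS0, aS1, aS2]
lemma aS4 : PowerSeries.coeff (R := ℚ) 4 aS = 7/5760 := by
  rw [aS, pinv _ four_ne_zero, constCoeff_shU]
  simp only [Finset.sum_range_succ, Finset.sum_range_zero]
  norm_num [shU1, shU2, shU3, shU4, aS_eq, constCoeff_shU, aS0, aS1, aS2, aS3]

-- coefficients of csh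
lemma coeff_csh (n : ℕ) : PowerSeries.coeff (R := ℚ) n csh
    = (2:ℚ)⁻¹ * ((2⁻¹ : ℚ) ^ n * ((n.factorial : ℚ))⁻¹ + (-2⁻¹ : ℚ) ^ n * ((n.factorial : ℚ))⁻¹) := by
  rw [csh, map_smul, smul_eq_mul, tch, map_add, coeff_eS, coeff_eS]

lemma csh0 : PowerSeries.coeff (R := ℚ) 0 csh = 1 := by rw [coeff_csh]; norm_num
lemma csh1 : PowerSeries.coeff (R := ℚ) 1 csh = 0 := by rw [coeff_csh]; norm_num
lemma csh2 : PowerSeries.coeff (R := ℚ) 2 csh = 1/8 := by rw [coeff_csh]; norm_num [Nat.factorial]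
lemma csh3 : PowerSeries.coeff (R := ℚ) 3 csh = 0 := by rw [coeff_csh]; norm_num [Nat.factorial]
lemma csh4 : PowerSeries.coeff (R := ℚ) 4 csh = 1/384 := by rw [coeff_csh]; norm_num [Nat.factorial]

lemma constCoeff_csh : PowerSeries.constantCoeff (R := ℚ) csh = 1 := by
  rw [← PowerSeries.coeff_zero_eq_constantCoeff]; exact csh0

lemma csh_mul_icsh : csh * icsh = 1 :=
  PowerSeries.mul_inv_cancel _ (by rw [constCoeff_csh]; norm_num)

lemma icsh0 : PowerSeries.coeff (R := ℚ) 0 icsh = 1 := by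
  rw [icsh, PowerSeries.coeff_inv, if_pos rfl, constCoeff_csh]; norm_num
lemma icsh1 : PowerSeries.coeff (R := ℚ) 1 icsh = 0 := by
  rw [icsh, pinv _ one_ne_zero, constCoeff_csh]
  simp only [Finset.sum_range_succ, Finset.sum_range_zero]
  norm_num [csh1, icsh_eq, constCoeff_csh]
lemma icsh2 : PowerSeries.coeff (R := ℚ) 2 icsh = -1/8 := by
  rw [icsh, pinv _ two_ne_zero, constCoeff_csh]
  simp only [Finset.sum_range_succ, Finset.sum_range_zero]
  norm_num [csh1, csh2, icsh_eq, constCoeff_csh, icsh0, icsh1]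
lemma icsh3 : PowerSeries.coeff (R := ℚ) 3 icsh = 0 := by
  rw [icsh, pinv _ three_ne_zero, constCoeff_csh]
  simp only [Finset.sum_range_succ, Finset.sum_range_zero]
  norm_num [csh1, csh2, csh3, icsh_eq, constCoeff_csh, icsh0, icsh1, icsh2]
lemma icsh4 : PowerSeries.coeff (R := ℚ) 4 icsh = 5/384 := by
  rw [icsh, pinv _ four_ne_zero, constCoeff_csh]
  simp only [Finset.sum_range_succ, Finset.sum_range_zero]
  norm_num [csh1, csh2, csh3, csh4, icsh_eq, constCoeff_csh, icsh0, icsh1, icsh2, icsh3]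

-- coefficients of tch, ch2, tS
lemma coeff_tch (n : ℕ) : PowerSeries.coeff (R := ℚ) n tch
    = (2⁻¹ : ℚ) ^ n * ((n.factorial : ℚ))⁻¹ + (-2⁻¹ : ℚ) ^ n * ((n.factorial : ℚ))⁻¹ := by
  rw [tch, map_add, coeff_eS, coeff_eS]
lemma tch0 : PowerSeries.coeff (R := ℚ) 0 tch = 2 := by rw [coeff_tch]; norm_num
lemma tch1 : PowerSeries.coeff (R := ℚ) 1 tch = 0 := by rw [coeff_tch]; norm_num
lemma tch2 : PowerSeries.coeff (R := ℚ) 2 tch = 1/4 := by rw [coeff_tch]; norm_num [Nat.factorial]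
lemma tch3 : PowerSeries.coeff (R := ℚ) 3 tch = 0 := by rw [coeff_tch]; norm_num [Nat.factorial]
lemma tch4 : PowerSeries.coeff (R := ℚ) 4 tch = 1/192 := by rw [coeff_tch]; norm_num [Nat.factorial]

lemma coeff_ch2 (n : ℕ) : PowerSeries.coeff (R := ℚ) n ch2
    = (1 : ℚ) ^ n * ((n.factorial : ℚ))⁻¹ + (-1 : ℚ) ^ n * ((n.factorial : ℚ))⁻¹ := by
  rw [ch2, map_add, coeff_eS, coeff_eS]
lemma ch2_0 : PowerSeries.coeff (R := ℚ) 0 ch2 = 2 := by rw [coeff_ch2]; norm_num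
lemma ch2_1 : PowerSeries.coeff (R := ℚ) 1 ch2 = 0 := by rw [coeff_ch2]; norm_num
lemma ch2_2 : PowerSeries.coeff (R := ℚ) 2 ch2 = 1 := by rw [coeff_ch2]; norm_num [Nat.factorial]
lemma ch2_3 : PowerSeries.coeff (R := ℚ) 3 ch2 = 0 := by rw [coeff_ch2]; norm_num [Nat.factorial]
lemma ch2_4 : PowerSeries.coeff (R := ℚ) 4 ch2 = 1/12 := by rw [coeff_ch2]; norm_num [Nat.factorial]

lemma coeff_tS (n : ℕ) : PowerSeries.coeff (R := ℚ) n tS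
    = PowerSeries.coeff (R := ℚ) n ch2 - (if n = 0 then 2 else 0) := by
  rw [tS, map_sub, coeff_two]
lemma tS0 : PowerSeries.coeff (R := ℚ) 0 tS = 0 := by rw [coeff_tS, ch2_0]; norm_num
lemma tS1 : PowerSeries.coeff (R := ℚ) 1 tS = 0 := by rw [coeff_tS, ch2_1]; norm_num
lemma tS2 : PowerSeries.coeff (R := ℚ) 2 tS = 1 := by rw [coeff_tS, ch2_2]; norm_num
lemma tS3 : PowerSeries.coeff (R := ℚ) 3 tS = 0 := by rw [coeff_tS, ch2_3]; norm_num
lemma tS4 : PowerSeries.coeff (R := ℚ) 4 tS = 1/12 := by rw [coeff_tS, ch2_4]; norm_num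

-- gS coefficients at specific points
lemma gS0v (c : ℚ) : PowerSeries.coeff (R := ℚ) 0 (gS c) = 1 := by rw [coeff_gS]; norm_num
lemma gS1v (c : ℚ) : PowerSeries.coeff (R := ℚ) 1 (gS c) = 0 := by rw [coeff_gS]; norm_num
lemma gS2v (c : ℚ) : PowerSeries.coeff (R := ℚ) 2 (gS c) = c := by rw [coeff_gS]; norm_num
lemma gS3v (c : ℚ) : PowerSeries.coeff (R := ℚ) 3 (gS c) = 0 := by rw [coeff_gS]; norm_num
lemma gS4v (c : ℚ) : PowerSeries.coeff (R := ℚ) 4 (gS c) = c^2/2 := by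
  rw [coeff_gS]; norm_num [Nat.factorial]; ring

end OneVar

section ProductCoeffs

/-- the numeric coefficient functions appearing in the final identity -/
def pa (n : ℕ) : ℚ := PowerSeries.coeff (R := ℚ) n (gS 24⁻¹ * aS)
def pc (n : ℕ) : ℚ := PowerSeries.coeff (R := ℚ) n (gS (-24⁻¹) * tch)
def pg (n : ℕ) : ℚ := PowerSeries.coeff (R := ℚ) n (gS (-24⁻¹))
def pd (n : ℕ) : ℚ := PowerSeries.coeff (R := ℚ) n (gS (-24⁻¹) * ch2)
def pr (n : ℕ) : ℚ := PowerSeries.coeff (R := ℚ) n (icsh * icsh)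
def ps (n : ℕ) : ℚ := PowerSeries.coeff (R := ℚ) n csh
def pt (n : ℕ) : ℚ := PowerSeries.coeff (R := ℚ) n (csh * tS)

lemma pa0 : pa 0 = 1 := by
  rw [pa, pmul]; simp only [Finset.sum_range_succ, Finset.sum_range_zero]
  norm_num [gS0v, aS0]
lemma pa1 : pa 1 = 0 := by
  rw [pa, pmul]; simp only [Finset.sum_range_succ, Finset.sum_range_zero]
  norm_num [gS0v, gS1v, aS0, aS1]
lemma pa2 : pa 2 = 0 := by
  rw [pa, pmul]; simp only [Finset.sum_range_succ, Finset.sum_range_zero]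
  norm_num [gS0v, gS1v, gS2v, aS0, aS1, aS2]
lemma pa3 : pa 3 = 0 := by
  rw [pa, pmul]; simp only [Finset.sum_range_succ, Finset.sum_range_zero]
  norm_num [gS0v, gS1v, gS2v, gS3v, aS0, aS1, aS2, aS3]
lemma pa4 : pa 4 = 1/2880 := by
  rw [pa, pmul]; simp only [Finset.sum_range_succ, Finset.sum_range_zero]
  norm_num [gS0v, gS1v, gS2v, gS3v, gS4v, aS0, aS1, aS2, aS3, aS4]

lemma pc0 : pc 0 = 2 := by
  rw [pc, pmul]; simp only [Finset.sum_range_succ, Finset.sum_range_zero]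
  norm_num [gS0v, tch0]
lemma pc1 : pc 1 = 0 := by
  rw [pc, pmul]; simp only [Finset.sum_range_succ, Finset.sum_range_zero]
  norm_num [gS0v, gS1v, tch0, tch1]
lemma pc2 : pc 2 = 1/6 := by
  rw [pc, pmul]; simp only [Finset.sum_range_succ, Finset.sum_range_zero]
  norm_num [gS0v, gS1v, gS2v, tch0, tch1, tch2]
lemma pc3 : pc 3 = 0 := by
  rw [pc, pmul]; simp only [Finset.sum_range_succ, Finset.sum_range_zero]
  norm_num [gS0v, gS1v, gS2v, gS3v, tch0, tch1, tch2, tch3]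
lemma pc4 : pc 4 = -1/288 := by
  rw [pc, pmul]; simp only [Finset.sum_range_succ, Finset.sum_range_zero]
  norm_num [gS0v, gS1v, gS2v, gS3v, gS4v, tch0, tch1, tch2, tch3, tch4]

lemma pg0 : pg 0 = 1 := by rw [pg]; exact gS0v _
lemma pg1 : pg 1 = 0 := by rw [pg]; exact gS1v _
lemma pg2 : pg 2 = -1/24 := by rw [pg, gS2v]; norm_num
lemma pg3 : pg 3 = 0 := by rw [pg]; exact gS3v _
lemma pg4 : pg 4 = 1/1152 := by rw [pg, gS4v]; norm_num

lemma pd0 : pd 0 = 2 := by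
  rw [pd, pmul]; simp only [Finset.sum_range_succ, Finset.sum_range_zero]
  norm_num [gS0v, ch2_0]
lemma pd1 : pd 1 = 0 := by
  rw [pd, pmul]; simp only [Finset.sum_range_succ, Finset.sum_range_zero]
  norm_num [gS0v, gS1v, ch2_0, ch2_1]
lemma pd2 : pd 2 = 11/12 := by
  rw [pd, pmul]; simp only [Finset.sum_range_succ, Finset.sum_range_zero]
  norm_num [gS0v, gS1v, gS2v, ch2_0, ch2_1, ch2_2]
lemma pd3 : pd 3 = 0 := by
  rw [pd, pmul]; simp only [Finset.sum_range_succ, Finset.sum_range_zero]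
  norm_num [gS0v, gS1v, gS2v, gS3v, ch2_0, ch2_1, ch2_2, ch2_3]
lemma pd4 : pd 4 = 25/576 := by
  rw [pd, pmul]; simp only [Finset.sum_range_succ, Finset.sum_range_zero]
  norm_num [gS0v, gS1v, gS2v, gS3v, gS4v, ch2_0, ch2_1, ch2_2, ch2_3, ch2_4]

lemma pr0 : pr 0 = 1 := by
  rw [pr, pmul]; simp only [Finset.sum_range_succ, Finset.sum_range_zero]
  norm_num [icsh0]
lemma pr1 : pr 1 = 0 := by
  rw [pr, pmul]; simp only [Finset.sum_range_succ, Finset.sum_range_zero]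
  norm_num [icsh0, icsh1]
lemma pr2 : pr 2 = -1/4 := by
  rw [pr, pmul]; simp only [Finset.sum_range_succ, Finset.sum_range_zero]
  norm_num [icsh0, icsh1, icsh2]
lemma pr3 : pr 3 = 0 := by
  rw [pr, pmul]; simp only [Finset.sum_range_succ, Finset.sum_range_zero]
  norm_num [icsh0, icsh1, icsh2, icsh3]
lemma pr4 : pr 4 = 1/24 := by
  rw [pr, pmul]; simp only [Finset.sum_range_succ, Finset.sum_range_zero]
  norm_num [icsh0, icsh1, icsh2, icsh3, icsh4]

lemma ps0 : ps 0 = 1 := csh0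
lemma ps1 : ps 1 = 0 := csh1
lemma ps2 : ps 2 = 1/8 := csh2
lemma ps3 : ps 3 = 0 := csh3
lemma ps4 : ps 4 = 1/384 := csh4

lemma pt0 : pt 0 = 0 := by
  rw [pt, pmul]; simp only [Finset.sum_range_succ, Finset.sum_range_zero]
  norm_num [csh0, tS0]
lemma pt1 : pt 1 = 0 := by
  rw [pt, pmul]; simp only [Finset.sum_range_succ, Finset.sum_range_zero]
  norm_num [csh0, csh1, tS0, tS1]
lemma pt2 : pt 2 = 1 := by
  rw [pt, pmul]; simp only [Finset.sum_range_succ, Finset.sum_range_zero]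
  norm_num [csh0, csh1, csh2, tS0, tS1, tS2]
lemma pt3 : pt 3 = 0 := by
  rw [pt, pmul]; simp only [Finset.sum_range_succ, Finset.sum_range_zero]
  norm_num [csh0, csh1, csh2, csh3, tS0, tS1, tS2, tS3]
lemma pt4 : pt 4 = 5/24 := by
  rw [pt, pmul]; simp only [Finset.sum_range_succ, Finset.sum_range_zero]
  norm_num [csh0, csh1, csh2, csh3, csh4, tS0, tS1, tS2, tS3, tS4]

end ProductCoeffs

end



section KeyNumeric

variable {l : ℕ}

-- evaluation helpers for products over Fin l
lemma prod_all_zero (f : ℕ → ℚ) (q : Fin l → ℕ) (h : ∀ k, q k = 0) :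
    ∏ k, f (q k) = f 0 ^ l := by
  rw [Finset.prod_congr rfl (fun k _ => by rw [h k]), Finset.prod_const, Finset.card_univ,
    Fintype.card_fin]

lemma prod_one_special (f : ℕ → ℚ) (q : Fin l → ℕ) (k0 : Fin l)
    (h : ∀ k, k ≠ k0 → q k = 0) :
    ∏ k, f (q k) = f (q k0) * f 0 ^ (l - 1) := by
  rw [← Finset.mul_prod_erase _ _ (Finset.mem_univ k0)]
  congr 1
  rw [Finset.prod_congr rfl (fun k hk => by rw [h k (Finset.ne_of_mem_erase hk)]),
    Finset.prod_const, Finset.card_erase_of_mem (Finset.mem_univ k0), Finset.card_univ,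
    Fintype.card_fin]

lemma prod_two_special (f : ℕ → ℚ) (q : Fin l → ℕ) (k0 k1 : Fin l) (hne : k1 ≠ k0)
    (h : ∀ k, k ≠ k0 → k ≠ k1 → q k = 0) :
    ∏ k, f (q k) = f (q k0) * f (q k1) * f 0 ^ (l - 2) := by
  rw [← Finset.mul_prod_erase _ _ (Finset.mem_univ k0),
    ← Finset.mul_prod_erase _ _ (Finset.mem_erase.mpr ⟨hne, Finset.mem_univ k1⟩), ← mul_assoc]
  congr 1
  rw [Finset.prod_congr rfl (fun k hk => by
      rw [h k (Finset.ne_of_mem_erase (Finset.mem_of_mem_erase hk))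
        (Finset.ne_of_mem_erase hk)]),
    Finset.prod_const, Finset.card_erase_of_mem
      (Finset.mem_erase.mpr ⟨hne, Finset.mem_univ k1⟩),
    Finset.card_erase_of_mem (Finset.mem_univ k0), Finset.card_univ, Fintype.card_fin,
    show l - 1 - 1 = l - 2 by omega]

/-- the `D` sum -/
noncomputable def Dsum (l : ℕ) (q : Fin l → ℕ) : ℚ :=
  ∑ k0, pd (q k0) * ∏ k ∈ Finset.univ.erase k0, pg (q k)

lemma erase_prod_zero (q : Fin l → ℕ) (k0 : Fin l) (h : ∀ k, k ≠ k0 → q k = 0) :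
    ∏ k ∈ Finset.univ.erase k0, pg (q k) = 1 :=
  Finset.prod_eq_one (fun k hk => by rw [h k (Finset.ne_of_mem_erase hk), pg0])

lemma Dsum_all_zero (q : Fin l → ℕ) (h : ∀ k, q k = 0) :
    Dsum l q = 2 * l := by
  rw [Dsum, Finset.sum_congr rfl (fun k0 _ => by
      rw [h k0, pd0, erase_prod_zero q k0 (fun k _ => h k)]),
    Finset.sum_const, Finset.card_univ, Fintype.card_fin]
  simp [mul_comm]

lemma Dsum_one_special (q : Fin l → ℕ) (k0 : Fin l) (h : ∀ k, k ≠ k0 → q k = 0) :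
    Dsum l q = pd (q k0) + (l - 1 : ℕ) * (2 * pg (q k0)) := by
  rw [Dsum, ← Finset.add_sum_erase _ _ (Finset.mem_univ k0)]
  congr 1
  · rw [erase_prod_zero q k0 h, mul_one]
  · rw [Finset.sum_congr rfl (fun k1 hk1 => by
        have hk1' : k1 ≠ k0 := Finset.ne_of_mem_erase hk1
        rw [h k1 hk1', pd0,
          ← Finset.mul_prod_erase _ _ (Finset.mem_erase.mpr ⟨Ne.symm hk1', Finset.mem_univ k0⟩),
          Finset.prod_eq_one (fun k hk => by
            rw [h k (Finset.ne_of_mem_erase hk), pg0]),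
          mul_one]),
      Finset.sum_const, Finset.card_erase_of_mem (Finset.mem_univ k0), Finset.card_univ,
      Fintype.card_fin]
    simp [mul_comm, mul_assoc]

lemma Dsum_two_special (q : Fin l → ℕ) (k0 k1 : Fin l) (hne : k1 ≠ k0)
    (h : ∀ k, k ≠ k0 → k ≠ k1 → q k = 0) :
    Dsum l q = pd (q k0) * pg (q k1) + pd (q k1) * pg (q k0)
      + (l - 2 : ℕ) * (2 * pg (q k0) * pg (q k1)) := by
  rw [Dsum, ← Finset.add_sum_erase _ _ (Finset.mem_univ k0),
    ← Finset.add_sum_erase _ _ (Finset.mem_erase.mpr ⟨hne, Finset.mem_univ k1⟩)]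
  have e1 : ∏ k ∈ Finset.univ.erase k0, pg (q k) = pg (q k1) := by
    rw [← Finset.mul_prod_erase _ _ (Finset.mem_erase.mpr ⟨hne, Finset.mem_univ k1⟩),
      Finset.prod_eq_one (fun k hk => by
        rw [h k (Finset.ne_of_mem_erase (Finset.mem_of_mem_erase hk))
          (Finset.ne_of_mem_erase hk), pg0]), mul_one]
  have e2 : ∏ k ∈ Finset.univ.erase k1, pg (q k) = pg (q k0) := by
    rw [← Finset.mul_prod_erase _ _
        (Finset.mem_erase.mpr ⟨Ne.symm hne, Finset.mem_univ k0⟩),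
      Finset.prod_eq_one (fun k hk => by
        rw [h k (Finset.ne_of_mem_erase hk)
          (Finset.ne_of_mem_erase (Finset.mem_of_mem_erase hk)), pg0]), mul_one]
  rw [e1, e2]
  have hterm : ∀ k2 ∈ (Finset.univ.erase k0).erase k1,
      pd (q k2) * ∏ k ∈ Finset.univ.erase k2, pg (q k)
        = 2 * (pg (q k0) * pg (q k1)) := by
    intro k2 hk2
    have h2a : k2 ≠ k1 := Finset.ne_of_mem_erase hk2
    have h2b : k2 ≠ k0 := Finset.ne_of_mem_erase (Finset.mem_of_mem_erase hk2)
    rw [h k2 h2b h2a, pd0,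
      ← Finset.mul_prod_erase _ _
        (Finset.mem_erase.mpr ⟨Ne.symm h2b, Finset.mem_univ k0⟩),
      ← Finset.mul_prod_erase _ _
        (Finset.mem_erase.mpr ⟨hne,
          Finset.mem_erase.mpr ⟨Ne.symm h2a, Finset.mem_univ k1⟩⟩),
      Finset.prod_eq_one (fun k hk => by
        have hka : k ≠ k1 := Finset.ne_of_mem_erase hk
        have hkb : k ≠ k0 :=
          Finset.ne_of_mem_erase (Finset.mem_of_mem_erase hk)
        rw [h k hkb hka, pg0]), mul_one]
  have e3 : ∑ k2 ∈ (Finset.univ.erase k0).erase k1,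
      pd (q k2) * ∏ k ∈ Finset.univ.erase k2, pg (q k)
      = ((l - 2 : ℕ) : ℚ) * (2 * (pg (q k0) * pg (q k1))) := by
    rw [Finset.sum_congr rfl hterm, Finset.sum_const,
      Finset.card_erase_of_mem (Finset.mem_erase.mpr ⟨hne, Finset.mem_univ k1⟩),
      Finset.card_erase_of_mem (Finset.mem_univ k0), Finset.card_univ, Fintype.card_fin,
      show l - 1 - 1 = l - 2 by omega, nsmul_eq_mul]
  rw [e3]
  ring

lemma beta_eq : (2:ℚ) ^ ((l:ℤ) - 4) = 2 ^ l / 16 := by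
  rw [zpow_sub₀ (by norm_num : (2:ℚ) ≠ 0), zpow_natCast]
  norm_num

lemma gamma_eq : (2:ℚ) ^ ((l:ℤ) - 3) = 2 ^ l / 8 := by
  rw [zpow_sub₀ (by norm_num : (2:ℚ) ≠ 0), zpow_natCast]
  norm_num

lemma pow_pred (h : 1 ≤ l) : (2:ℚ) ^ (l - 1) = 2 ^ l / 2 := by
  rw [eq_div_iff (by norm_num : (2:ℚ) ≠ 0), ← pow_succ]
  congr 1
  omega

lemma pow_pred2 (h : 2 ≤ l) : (2:ℚ) ^ (l - 2) = 2 ^ l / 4 := by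
  rw [eq_div_iff (by norm_num : (4:ℚ) ≠ 0), show (4:ℚ) = 2^2 by norm_num, ← pow_add]
  congr 1
  omega

/-- The core numeric identity. -/
lemma key (l : ℕ) (q : Fin l → ℕ) (nu : ℕ)
    (h : ((∑ k, q k) + nu = 4) ∨ ((∀ k, q k = 0) ∧ nu = 0)) :
    (∏ k, pc (q k)) * pr nu
      = ps nu * (-((2:ℚ) ^ ((l:ℤ) - 4) * Dsum l q)
            + ((2:ℚ) ^ ((l:ℤ) - 3) * ((l:ℚ) + 8)) * ∏ k, pg (q k))
        + 3 * (2:ℚ) ^ ((l:ℤ) - 4) * (∏ k, pg (q k)) * pt nu := by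
  rcases h with h4 | ⟨hz, hnu⟩
  case inr =>
    subst hnu
    rw [prod_all_zero pc q hz, prod_all_zero pg q hz, Dsum_all_zero q hz,
      pc0, pg0, pr0, ps0, pt0, beta_eq, gamma_eq]
    ring
  case inl =>
  by_cases hbad : ∃ k, q k ≠ 0 ∧ q k ≠ 2 ∧ q k ≠ 4
  · obtain ⟨k, hk0, hk2, hk4⟩ := hbad
    have hkle : q k ≤ 4 := by
      have := Finset.single_le_sum (f := q) (fun i _ => Nat.zero_le (q i)) (Finset.mem_univ k)
      omega
    have hc : pc (q k) = 0 ∧ pg (q k) = 0 ∧ pd (q k) = 0 := by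
      interval_cases hqk : q k <;> simp_all [pc1, pc3, pg1, pg3, pd1, pd3]
    have hQ1 : ∏ k', pc (q k') = 0 := Finset.prod_eq_zero (Finset.mem_univ k) hc.1
    have hQG : ∏ k', pg (q k') = 0 := Finset.prod_eq_zero (Finset.mem_univ k) hc.2.1
    have hD : Dsum l q = 0 := by
      rw [Dsum]
      apply Finset.sum_eq_zero
      intro k0 _
      rcases eq_or_ne k0 k with rfl | hne
      · rw [hc.2.2, zero_mul]
      · rw [Finset.prod_eq_zero
          (Finset.mem_erase.mpr ⟨Ne.symm hne, Finset.mem_univ k⟩) hc.2.1, mul_zero]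
    rw [hQ1, hQG, hD]
    ring
  · push_neg at hbad
    have hqv : ∀ k, q k = 0 ∨ q k = 2 ∨ q k = 4 := by
      intro k
      rcases eq_or_ne (q k) 0 with h | h
      · exact Or.inl h
      rcases eq_or_ne (q k) 2 with h2 | h2
      · exact Or.inr (Or.inl h2)
      exact Or.inr (Or.inr (hbad k h h2))
    have hdvd : 2 ∣ ∑ k, q k := by
      apply Finset.dvd_sum
      intro k _
      rcases hqv k with h | h | h <;> omega
    have hnule : nu ≤ 4 := by omega
    interval_cases nu
    -- nu = 0
    · have hsum : ∑ k, q k = 4 := by omega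
      have hex : ∃ k0, q k0 ≠ 0 := by
        by_contra hc
        push_neg at hc
        rw [Finset.sum_eq_zero (fun k _ => hc k)] at hsum
        omega
      obtain ⟨k0, hk0⟩ := hex
      have hsplit : q k0 + ∑ k ∈ Finset.univ.erase k0, q k = 4 := by
        rw [Finset.add_sum_erase _ _ (Finset.mem_univ k0)]
        exact hsum
      rcases hqv k0 with h | hq2 | hq4
      · exact absurd h hk0
      · -- q k0 = 2, need a second special index
        have hrest : ∑ k ∈ Finset.univ.erase k0, q k = 2 := by omega
        have hex1 : ∃ k1 ∈ Finset.univ.erase k0, q k1 ≠ 0 := by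
          by_contra hc
          push_neg at hc
          rw [Finset.sum_eq_zero hc] at hrest
          omega
        obtain ⟨k1, hk1mem, hk1⟩ := hex1
        have hk1ne : k1 ≠ k0 := Finset.ne_of_mem_erase hk1mem
        have hk1le : q k1 ≤ 2 := by
          have := Finset.single_le_sum (f := q) (fun i _ => Nat.zero_le (q i)) hk1mem
          omega
        have hq12 : q k1 = 2 := by rcases hqv k1 with h | h | h <;> omega
        have hzrest : ∀ k, k ≠ k0 → k ≠ k1 → q k = 0 := by
          intro k hka hkb
          have hsplit2 : q k1 + ∑ k' ∈ (Finset.univ.erase k0).erase k1, q k' = 2 := by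
            rw [Finset.add_sum_erase _ _ hk1mem]
            exact hrest
          have : ∑ k' ∈ (Finset.univ.erase k0).erase k1, q k' = 0 := by omega
          have := (Finset.sum_eq_zero_iff).mp this k
            (Finset.mem_erase.mpr ⟨hkb, Finset.mem_erase.mpr ⟨hka, Finset.mem_univ k⟩⟩)
          exact this
        have hl2 : 2 ≤ l := by
          have h1 := k0.isLt
          have h2 := k1.isLt
          have h3 : (k1 : ℕ) ≠ (k0 : ℕ) := fun hc => hk1ne (Fin.ext hc)
          omega
        rw [prod_two_special pc q k0 k1 hk1ne hzrest,
          prod_two_special pg q k0 k1 hk1ne hzrest,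
          Dsum_two_special q k0 k1 hk1ne hzrest, hq2, hq12,
          pc2, pc0, pg2, pg0, pd2, pr0, ps0, pt0, beta_eq, gamma_eq, pow_pred2 hl2]
        have : ((l - 2 : ℕ) : ℚ) = (l : ℚ) - 2 := by
          push_cast [Nat.cast_sub hl2]
          ring
        rw [this]
        ring
      · -- q k0 = 4
        have hzrest : ∀ k, k ≠ k0 → q k = 0 := by
          intro k hka
          have : ∑ k' ∈ Finset.univ.erase k0, q k' = 0 := by omega
          exact (Finset.sum_eq_zero_iff).mp this k
            (Finset.mem_erase.mpr ⟨hka, Finset.mem_univ k⟩)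
        have hl1 : 1 ≤ l := k0.pos
        rw [prod_one_special pc q k0 hzrest, prod_one_special pg q k0 hzrest,
          Dsum_one_special q k0 hzrest, hq4,
          pc4, pc0, pg4, pg0, pd4, pr0, ps0, pt0, beta_eq, gamma_eq, pow_pred hl1]
        have : ((l - 1 : ℕ) : ℚ) = (l : ℚ) - 1 := by
          push_cast [Nat.cast_sub hl1]
          ring
        rw [this]
        ring
    -- nu = 1
    · rw [pr1, ps1, pt1]; ring
    -- nu = 2
    · have hsum : ∑ k, q k = 2 := by omega
      have hex : ∃ k0, q k0 ≠ 0 := by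
        by_contra hc
        push_neg at hc
        rw [Finset.sum_eq_zero (fun k _ => hc k)] at hsum
        omega
      obtain ⟨k0, hk0⟩ := hex
      have hle : q k0 ≤ 2 := by
        have := Finset.single_le_sum (f := q) (fun i _ => Nat.zero_le (q i)) (Finset.mem_univ k0)
        omega
      have hq2 : q k0 = 2 := by rcases hqv k0 with h | h | h <;> omega
      have hsplit : q k0 + ∑ k ∈ Finset.univ.erase k0, q k = 2 := by
        rw [Finset.add_sum_erase _ _ (Finset.mem_univ k0)]
        exact hsum
      have hzrest : ∀ k, k ≠ k0 → q k = 0 := by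
        intro k hka
        have : ∑ k' ∈ Finset.univ.erase k0, q k' = 0 := by omega
        exact (Finset.sum_eq_zero_iff).mp this k
          (Finset.mem_erase.mpr ⟨hka, Finset.mem_univ k⟩)
      have hl1 : 1 ≤ l := k0.pos
      rw [prod_one_special pc q k0 hzrest, prod_one_special pg q k0 hzrest,
        Dsum_one_special q k0 hzrest, hq2,
        pc2, pc0, pg2, pg0, pd2, pr2, ps2, pt2, beta_eq, gamma_eq, pow_pred hl1]
      have : ((l - 1 : ℕ) : ℚ) = (l : ℚ) - 1 := by
        push_cast [Nat.cast_sub hl1]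
        ring
      rw [this]
      ring
    -- nu = 3
    · rw [pr3, ps3, pt3]; ring
    -- nu = 4
    · have hsum : ∑ k, q k = 0 := by omega
      have hz : ∀ k, q k = 0 := fun k =>
        (Finset.sum_eq_zero_iff).mp hsum k (Finset.mem_univ k)
      rw [prod_all_zero pc q hz, prod_all_zero pg q hz, Dsum_all_zero q hz,
        pc0, pg0, pr4, ps4, pt4, beta_eq, gamma_eq]
      ring
end KeyNumeric



noncomputable section MainAssembly

variable {l : ℕ}

abbrev σt (l : ℕ) := (Fin 4 ⊕ Fin l) ⊕ Unit

/-- the exponential weights for `e^{(1/24)(p₁(TX)-p₁(W))}` -/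
def cfF (l : ℕ) : σt l → ℚ :=
  Sum.elim (Sum.elim (fun _ => (24:ℚ)⁻¹) (fun _ => -(24:ℚ)⁻¹)) (fun _ => 0)

lemma prod3 (f : Fin 4 → PowerSeries ℚ) (g : Fin l → PowerSeries ℚ) (h : PowerSeries ℚ) :
    (∏ j, sv (Sum.inl (Sum.inl j) : σt l) (f j)) *
      (∏ k, sv (Sum.inl (Sum.inr k) : σt l) (g k)) *
      sv (Sum.inr () : σt l) h
    = ∏ v : σt l, sv v (Sum.elim (Sum.elim f g) (fun _ => h) v) := by
  rw [Fintype.prod_sum_type, Fintype.prod_sum_type]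
  simp only [Sum.elim_inl, Sum.elim_inr]
  rw [Fintype.prod_unique (fun b : Unit => sv (Sum.inr b : σt l) h)]

lemma prod_sv_mul (F G : σt l → PowerSeries ℚ) :
    (∏ v, sv v (F v)) * (∏ v, sv v (G v)) = ∏ v : σt l, sv v (F v * G v) := by
  rw [← Finset.prod_mul_distrib]
  exact Finset.prod_congr rfl (fun v _ => (sv_mul v (F v) (G v)).symm)

lemma prodsplit (φ : σt l → ℚ) :
    ∏ v : σt l, φ v
      = (∏ j, φ (Sum.inl (Sum.inl j))) * (∏ k, φ (Sum.inl (Sum.inr k))) *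
          φ (Sum.inr ()) := by
  rw [Fintype.prod_sum_type, Fintype.prod_sum_type,
    Fintype.prod_unique (fun b : Unit => φ (Sum.inr b))]

lemma sumsplit (φ : σt l → ℕ) :
    ∑ v : σt l, φ v
      = (∑ j, φ (Sum.inl (Sum.inl j))) + (∑ k, φ (Sum.inl (Sum.inr k))) +
          φ (Sum.inr ()) := by
  rw [Fintype.sum_sum_type, Fintype.sum_sum_type,
    Fintype.sum_unique (fun b : Unit => φ (Sum.inr b))]

-- definitional folding lemmas
lemma pa_def (n : ℕ) : PowerSeries.coeff (R := ℚ) n (gS 24⁻¹ * aS) = pa n := rfl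
lemma pc_def (n : ℕ) : PowerSeries.coeff (R := ℚ) n (gS (-24⁻¹) * tch) = pc n := rfl
lemma pg_def (n : ℕ) : PowerSeries.coeff (R := ℚ) n (gS (-24⁻¹)) = pg n := rfl
lemma pr_def (n : ℕ) : PowerSeries.coeff (R := ℚ) n (icsh * icsh) = pr n := rfl
lemma ps_def (n : ℕ) : PowerSeries.coeff (R := ℚ) n csh = ps n := rfl
lemma pt_def (n : ℕ) : PowerSeries.coeff (R := ℚ) n (csh * tS) = pt n := rfl

lemma Dterm_eq (q : Fin l → ℕ) (k0 : Fin l) :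
    (∏ k, PowerSeries.coeff (R := ℚ) (q k) (gS (-24⁻¹) * (if k = k0 then ch2 else 1)))
      = pd (q k0) * ∏ k ∈ Finset.univ.erase k0, pg (q k) := by
  rw [← Finset.mul_prod_erase _ _ (Finset.mem_univ k0), if_pos rfl]
  congr 1
  apply Finset.prod_congr rfl
  intro k hk
  rw [if_neg (Finset.ne_of_mem_erase hk), mul_one, pg_def]

lemma constantCoeff_smul_X_sq (c : ℚ) (v : σt l) :
    MvPowerSeries.constantCoeff (σ := (σt l)) (R := ℚ) (c • (X v : MvPowerSeries (σt l) ℚ) ^ 2) = 0 := by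
  rw [← MvPowerSeries.coeff_zero_eq_constantCoeff, map_smul, MvPowerSeries.coeff_X_pow,
    if_neg, smul_zero]
  intro hc
  have := DFunLike.congr_fun hc v
  simp at this

end MainAssembly

/-- Corollary 1.5(2), twisted case (eq. (1.39)/(1.45)): in degree 4 (form degree 8),
`{e^{(1/24)(p₁(TX)-p₁(W))}[Â(TX) det^{1/2}(2cosh((√-1/4π)R^W))/cosh²(c/2)
   - Â(TX) cosh(c/2)(-2^{l-4} ch(W_ℂ) + 2^{l-3}(l+8) + 3·2^{l-4}(e^c + e^{-c} - 2))]}^{(8)} = 0`,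
at the level of Chern roots `±xⱼ` for `T_ℂX` (`dim X = 8`), `±yₖ` for `W_ℂ` (`rk W = 2l`),
with `u` the Euler form of `ξ`. `A j` is the Â-series of `xⱼ`, and
`(mcosh ((2:ℚ)⁻¹ • u))⁻¹` is the multiplicative inverse of the unit power series `cosh(u/2)`. -/
theorem anomaly_dim8_twisted (l : ℕ)
    (A : Fin 4 → MvPowerSeries ((Fin 4 ⊕ Fin l) ⊕ Unit) ℚ)
    (hA : ∀ j, A j * (mexp ((2 : ℚ)⁻¹ • X (Sum.inl (Sum.inl j))) -
        mexp (-((2 : ℚ)⁻¹ • X (Sum.inl (Sum.inl j))))) = X (Sum.inl (Sum.inl j)))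
    (m : ((Fin 4 ⊕ Fin l) ⊕ Unit) →₀ ℕ) (hm : (m.sum fun _ e => e) = 4) :
    MvPowerSeries.coeff (R := ℚ) m
      (mexp ((24 : ℚ)⁻¹ •
          ((∑ j, X (Sum.inl (Sum.inl j)) ^ 2) - ∑ k, X (Sum.inl (Sum.inr k)) ^ 2)) *
        ((∏ j, A j) *
            (∏ k, (mexp ((2 : ℚ)⁻¹ • X (Sum.inl (Sum.inr k))) +
              mexp (-((2 : ℚ)⁻¹ • X (Sum.inl (Sum.inr k)))))) *
            ((mcosh ((2 : ℚ)⁻¹ • X (Sum.inr ())))⁻¹) ^ 2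
          - (∏ j, A j) * mcosh ((2 : ℚ)⁻¹ • X (Sum.inr ())) *
            (-((2 : ℚ) ^ ((l : ℤ) - 4) •
                (∑ k, (mexp (X (Sum.inl (Sum.inr k))) + mexp (-X (Sum.inl (Sum.inr k))))))
              + MvPowerSeries.C (σ := _) (R := ℚ) ((2 : ℚ) ^ ((l : ℤ) - 3) * ((l : ℚ) + 8))
              + (3 * (2 : ℚ) ^ ((l : ℤ) - 4)) •
                (mexp (X (Sum.inr ())) + mexp (-X (Sum.inr ())) - 2))))
    = 0 := by
  classical
  set β : ℚ := (2 : ℚ) ^ ((l : ℤ) - 4) with hβ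
  set γ : ℚ := (2 : ℚ) ^ ((l : ℤ) - 3) * ((l : ℚ) + 8) with hγ
  -- identification of the pieces as single-variable series
  have hAj : ∀ j, A j = sv (Sum.inl (Sum.inl j) : σt l) aS := by
    intro j
    have hs : mexp ((2:ℚ)⁻¹ • X (Sum.inl (Sum.inl j) : σt l)) -
        mexp (-((2:ℚ)⁻¹ • X (Sum.inl (Sum.inl j)))) = sv (Sum.inl (Sum.inl j)) snh := by
      rw [mexp_smul_X, mexp_neg_smul_X, ← sv_sub]
      rfl
    have h2 := hA j
    rw [hs, snh_eq, sv_mul, sv_X] at h2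
    have hX0 : (X (Sum.inl (Sum.inl j)) : MvPowerSeries (σt l) ℚ) ≠ 0 := by
      intro hc
      have h1 := congrArg (MvPowerSeries.coeff (R := ℚ) (Finsupp.single (Sum.inl (Sum.inl j)) 1)) hc
      rw [MvPowerSeries.coeff_index_single_self_X, map_zero] at h1
      exact one_ne_zero h1
    have h4 : A j * sv (Sum.inl (Sum.inl j)) shU = 1 := by
      apply mul_right_cancel₀ hX0
      rw [one_mul]
      calc (A j * sv (Sum.inl (Sum.inl j)) shU) * X (Sum.inl (Sum.inl j))
          = A j * (X (Sum.inl (Sum.inl j)) * sv (Sum.inl (Sum.inl j)) shU) := by ring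
        _ = X (Sum.inl (Sum.inl j)) := h2
    calc A j = A j * (sv (Sum.inl (Sum.inl j)) shU * sv (Sum.inl (Sum.inl j)) aS) := by
          rw [← sv_mul, shU_mul_aS, sv_one, mul_one]
      _ = (A j * sv (Sum.inl (Sum.inl j)) shU) * sv (Sum.inl (Sum.inl j)) aS := by ring
      _ = sv (Sum.inl (Sum.inl j)) aS := by rw [h4, one_mul]
  have hprodA : (∏ j, A j) = ∏ j, sv (Sum.inl (Sum.inl j) : σt l) aS :=
    Finset.prod_congr rfl (fun j _ => hAj j)
  have hprodY : (∏ k, (mexp ((2:ℚ)⁻¹ • X (Sum.inl (Sum.inr k) : σt l)) +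
      mexp (-((2:ℚ)⁻¹ • X (Sum.inl (Sum.inr k))))))
      = ∏ k, sv (Sum.inl (Sum.inr k) : σt l) tch :=
    Finset.prod_congr rfl (fun k _ => by
      rw [mexp_smul_X, mexp_neg_smul_X, ← sv_add]; rfl)
  have hcosh : mcosh ((2:ℚ)⁻¹ • X (Sum.inr () : σt l)) = sv (Sum.inr ()) csh := by
    unfold mcosh
    rw [mexp_smul_X, mexp_neg_smul_X, ← sv_add]
    rw [← sv_smul]
    rfl
  have hicsh : (mcosh ((2:ℚ)⁻¹ • X (Sum.inr () : σt l)))⁻¹ = sv (Sum.inr ()) icsh := by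
    rw [hcosh, MvPowerSeries.inv_eq_iff_mul_eq_one, ← sv_mul, mul_comm icsh csh,
      csh_mul_icsh, sv_one]
    rw [constantCoeff_sv, constCoeff_csh]
    norm_num
  have hicsh2 : ((mcosh ((2:ℚ)⁻¹ • X (Sum.inr () : σt l)))⁻¹) ^ 2
      = sv (Sum.inr ()) (icsh * icsh) := by
    rw [hicsh, sv_mul, sq]
  have hsumch : (∑ k, (mexp (X (Sum.inl (Sum.inr k) : σt l)) +
      mexp (-X (Sum.inl (Sum.inr k)))))
      = ∑ k, sv (Sum.inl (Sum.inr k) : σt l) ch2 :=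
    Finset.sum_congr rfl (fun k _ => by
      rw [show (X (Sum.inl (Sum.inr k)) : MvPowerSeries (σt l) ℚ)
          = (1:ℚ) • X (Sum.inl (Sum.inr k)) from (one_smul ℚ _).symm,
        mexp_smul_X, mexp_neg_smul_X, ← sv_add]
      rfl)
  have hsv2 : sv (Sum.inr () : σt l) (2 : PowerSeries ℚ) = 2 := by
    rw [show (2 : PowerSeries ℚ) = 1 + 1 from (one_add_one_eq_two).symm, sv_add, sv_one,
      one_add_one_eq_two]
  have htS : mexp (X (Sum.inr () : σt l)) + mexp (-X (Sum.inr ())) - 2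
      = sv (Sum.inr ()) tS := by
    rw [show (X (Sum.inr ()) : MvPowerSeries (σt l) ℚ)
        = (1:ℚ) • X (Sum.inr ()) from (one_smul ℚ _).symm,
      mexp_smul_X, mexp_neg_smul_X, ← hsv2, ← sv_add, ← sv_sub]
    rfl
  have hCγ : MvPowerSeries.C (σ := _) (R := ℚ) γ = sv (Sum.inr () : σt l) (PowerSeries.C (R := ℚ) γ) :=
    (sv_C _ γ).symm
  -- the exponential factor
  have harg : (24:ℚ)⁻¹ • ((∑ j, (X (Sum.inl (Sum.inl j)) : MvPowerSeries (σt l) ℚ) ^ 2)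
        - ∑ k, (X (Sum.inl (Sum.inr k)) : MvPowerSeries (σt l) ℚ) ^ 2)
      = ∑ v : σt l, cfF l v • (X v) ^ 2 := by
    rw [Fintype.sum_sum_type, Fintype.sum_sum_type,
      Fintype.sum_unique (fun b : Unit => cfF l (Sum.inr b) • (X (Sum.inr b)) ^ 2)]
    simp only [cfF, Sum.elim_inl, Sum.elim_inr, zero_smul, add_zero, neg_smul, smul_sub,
      smul_add, smul_neg, Finset.smul_sum, Finset.sum_neg_distrib, sub_eq_add_neg]
  have hE : mexp ((24:ℚ)⁻¹ • ((∑ j, (X (Sum.inl (Sum.inl j)) : MvPowerSeries (σt l) ℚ) ^ 2)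
        - ∑ k, (X (Sum.inl (Sum.inr k)) : MvPowerSeries (σt l) ℚ) ^ 2))
      = ∏ v : σt l, sv v (gS (cfF l v)) := by
    rw [harg, mexp_sum Finset.univ _ (fun v _ => constantCoeff_smul_X_sq (cfF l v) v)]
    exact Finset.prod_congr rfl (fun v _ => by
      rw [mexp_smul_X_pow (cfF l v) v two_ne_zero]; rfl)
  -- abbreviations
  rw [hprodA, hprodY, hicsh2, hcosh, hsumch, htS, hE,
    MvPowerSeries.smul_eq_C_mul, MvPowerSeries.smul_eq_C_mul]
  set E : MvPowerSeries (σt l) ℚ := ∏ v : σt l, sv v (gS (cfF l v)) with hEd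
  set PA : MvPowerSeries (σt l) ℚ := ∏ j, sv (Sum.inl (Sum.inl j) : σt l) aS with hPAd
  set PYt : MvPowerSeries (σt l) ℚ := ∏ k, sv (Sum.inl (Sum.inr k) : σt l) tch with hPYd
  set S : MvPowerSeries (σt l) ℚ := ∑ k, sv (Sum.inl (Sum.inr k) : σt l) ch2 with hSd
  have hy1 : (∏ k, sv (Sum.inl (Sum.inr k) : σt l) (1 : PowerSeries ℚ)) = 1 :=
    Finset.prod_eq_one (fun k _ => sv_one _)
  have hcollapse : ∀ k0 : Fin l,
      (∏ k, sv (Sum.inl (Sum.inr k) : σt l) (if k = k0 then ch2 else 1))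
        = sv (Sum.inl (Sum.inr k0)) ch2 := by
    intro k0
    rw [← Finset.mul_prod_erase _ _ (Finset.mem_univ k0), if_pos rfl,
      Finset.prod_eq_one (fun k hk => by
        rw [if_neg (Finset.ne_of_mem_erase hk)]; exact sv_one _), mul_one]
  -- canonical product forms
  have key1 : E * (PA * PYt * sv (Sum.inr () : σt l) (icsh * icsh))
      = ∏ v : σt l, sv v (gS (cfF l v) *
          (Sum.elim (Sum.elim (fun _ : Fin 4 => aS) (fun _ : Fin l => tch))
            (fun _ => icsh * icsh) v)) := by
    rw [hEd, hPAd, hPYd, prod3, prod_sv_mul]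
  have key2 : ∀ k0 : Fin l, E * (PA *
        (∏ k, sv (Sum.inl (Sum.inr k) : σt l) (if k = k0 then ch2 else 1)) *
        sv (Sum.inr () : σt l) csh)
      = ∏ v : σt l, sv v (gS (cfF l v) *
          (Sum.elim (Sum.elim (fun _ : Fin 4 => aS)
            (fun k : Fin l => if k = k0 then ch2 else 1)) (fun _ => csh) v)) := by
    intro k0
    rw [hEd, hPAd, prod3, prod_sv_mul]
  have key3 : E * (PA * (∏ k, sv (Sum.inl (Sum.inr k) : σt l) (1 : PowerSeries ℚ)) *
        sv (Sum.inr () : σt l) csh)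
      = ∏ v : σt l, sv v (gS (cfF l v) *
          (Sum.elim (Sum.elim (fun _ : Fin 4 => aS) (fun _ : Fin l => (1 : PowerSeries ℚ)))
            (fun _ => csh) v)) := by
    rw [hEd, hPAd, prod3, prod_sv_mul]
  have key4 : E * (PA * (∏ k, sv (Sum.inl (Sum.inr k) : σt l) (1 : PowerSeries ℚ)) *
        sv (Sum.inr () : σt l) (csh * tS))
      = ∏ v : σt l, sv v (gS (cfF l v) *
          (Sum.elim (Sum.elim (fun _ : Fin 4 => aS) (fun _ : Fin l => (1 : PowerSeries ℚ)))
            (fun _ => csh * tS) v)) := by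
    rw [hEd, hPAd, prod3, prod_sv_mul]
  -- expand the bracket
  have hexp : E * (PA * PYt * sv (Sum.inr () : σt l) (icsh * icsh)
        - PA * sv (Sum.inr () : σt l) csh *
          (-(MvPowerSeries.C (σ := (σt l)) (R := ℚ) β * S) + MvPowerSeries.C (σ := (σt l)) (R := ℚ) γ
            + MvPowerSeries.C (σ := (σt l)) (R := ℚ) (3 * β) * sv (Sum.inr ()) tS))
      = E * (PA * PYt * sv (Sum.inr () : σt l) (icsh * icsh))
        - (-(MvPowerSeries.C (σ := (σt l)) (R := ℚ) β *
              ∑ k0, E * (PA *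
                (∏ k, sv (Sum.inl (Sum.inr k) : σt l) (if k = k0 then ch2 else 1)) *
                sv (Sum.inr () : σt l) csh))
          + MvPowerSeries.C (σ := (σt l)) (R := ℚ) γ *
              (E * (PA * (∏ k, sv (Sum.inl (Sum.inr k) : σt l) (1 : PowerSeries ℚ)) *
                sv (Sum.inr () : σt l) csh))
          + MvPowerSeries.C (σ := (σt l)) (R := ℚ) (3 * β) *
              (E * (PA * (∏ k, sv (Sum.inl (Sum.inr k) : σt l) (1 : PowerSeries ℚ)) *
                sv (Sum.inr () : σt l) (csh * tS)))) := by
    have hsum : (E * (PA * sv (Sum.inr () : σt l) csh)) * S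
        = ∑ k0, E * (PA *
            (∏ k, sv (Sum.inl (Sum.inr k) : σt l) (if k = k0 then ch2 else 1)) *
            sv (Sum.inr () : σt l) csh) := by
      rw [hSd, Finset.mul_sum]
      exact Finset.sum_congr rfl (fun k0 _ => by rw [← hcollapse k0]; ring)
    rw [← hsum, hy1, mul_one,
      show sv (Sum.inr () : σt l) (csh * tS)
          = sv (Sum.inr ()) csh * sv (Sum.inr ()) tS from sv_mul _ _ _]
    ring
  rw [hexp]
  rw [key1, key3, key4, Finset.sum_congr rfl (fun k0 _ => key2 k0)]
  -- take coefficients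
  rw [map_sub, map_add, map_add, map_neg, MvPowerSeries.coeff_C_mul,
    MvPowerSeries.coeff_C_mul, MvPowerSeries.coeff_C_mul, map_sum]
  -- evaluate each coefficient
  have hcv : ∀ j : Fin 4, cfF l (Sum.inl (Sum.inl j)) = 24⁻¹ := fun _ => rfl
  have hcv2 : ∀ k : Fin l, cfF l (Sum.inl (Sum.inr k)) = -24⁻¹ := fun _ => rfl
  have hcv3 : cfF l (Sum.inr () : σt l) = 0 := rfl
  have hvac : ∀ j : σt l, j ∉ (Finset.univ : Finset (σt l)) → m j = 0 :=
    fun j hj => absurd (Finset.mem_univ j) hj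
  have c1 : MvPowerSeries.coeff (R := ℚ) m (∏ v : σt l, sv v (gS (cfF l v) *
        (Sum.elim (Sum.elim (fun _ : Fin 4 => aS) (fun _ : Fin l => tch))
          (fun _ => icsh * icsh) v)))
      = (∏ j, pa (m (Sum.inl (Sum.inl j)))) * (∏ k, pc (m (Sum.inl (Sum.inr k)))) *
          pr (m (Sum.inr ())) := by
    rw [coeff_prod_sv, if_pos hvac, prodsplit]
    simp only [Sum.elim_inl, Sum.elim_inr, hcv, hcv2, hcv3]
    rw [gS_zero, one_mul]
    simp only [pa_def, pc_def, pr_def]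
  have c2 : ∀ k0 : Fin l, MvPowerSeries.coeff (R := ℚ) m (∏ v : σt l, sv v (gS (cfF l v) *
        (Sum.elim (Sum.elim (fun _ : Fin 4 => aS)
          (fun k : Fin l => if k = k0 then ch2 else 1)) (fun _ => csh) v)))
      = (∏ j, pa (m (Sum.inl (Sum.inl j)))) *
          (pd (m (Sum.inl (Sum.inr k0))) *
            ∏ k ∈ Finset.univ.erase k0, pg (m (Sum.inl (Sum.inr k)))) *
          ps (m (Sum.inr ())) := by
    intro k0
    rw [coeff_prod_sv, if_pos hvac, prodsplit]
    simp only [Sum.elim_inl, Sum.elim_inr, hcv, hcv2, hcv3]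
    rw [gS_zero, one_mul]
    rw [Dterm_eq (fun k => m (Sum.inl (Sum.inr k))) k0]
    simp only [pa_def, ps_def]
  have c3 : MvPowerSeries.coeff (R := ℚ) m (∏ v : σt l, sv v (gS (cfF l v) *
        (Sum.elim (Sum.elim (fun _ : Fin 4 => aS) (fun _ : Fin l => (1 : PowerSeries ℚ)))
          (fun _ => csh) v)))
      = (∏ j, pa (m (Sum.inl (Sum.inl j)))) * (∏ k, pg (m (Sum.inl (Sum.inr k)))) *
          ps (m (Sum.inr ())) := by
    rw [coeff_prod_sv, if_pos hvac, prodsplit]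
    simp only [Sum.elim_inl, Sum.elim_inr, hcv, hcv2, hcv3, mul_one]
    rw [gS_zero, one_mul]
    simp only [pa_def, pg_def, ps_def]
  have c4 : MvPowerSeries.coeff (R := ℚ) m (∏ v : σt l, sv v (gS (cfF l v) *
        (Sum.elim (Sum.elim (fun _ : Fin 4 => aS) (fun _ : Fin l => (1 : PowerSeries ℚ)))
          (fun _ => csh * tS) v)))
      = (∏ j, pa (m (Sum.inl (Sum.inl j)))) * (∏ k, pg (m (Sum.inl (Sum.inr k)))) *
          pt (m (Sum.inr ())) := by
    rw [coeff_prod_sv, if_pos hvac, prodsplit]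
    simp only [Sum.elim_inl, Sum.elim_inr, hcv, hcv2, hcv3, mul_one]
    rw [gS_zero, one_mul]
    simp only [pa_def, pg_def, pt_def]
  rw [c1, c3, c4, Finset.sum_congr rfl (fun k0 _ => c2 k0)]
  -- the numeric endgame
  have hm4 : (∑ j, m (Sum.inl (Sum.inl j) : σt l)) + (∑ k, m (Sum.inl (Sum.inr k))) +
      m (Sum.inr ()) = 4 := by
    rw [← sumsplit (fun v : σt l => m v)]
    rw [← Finsupp.sum_fintype m (fun _ e => e) (fun _ => rfl)]
    exact hm
  have hfact : (∏ j, pa (m (Sum.inl (Sum.inl j) : σt l))) *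
        (∏ k, pc (m (Sum.inl (Sum.inr k)))) * pr (m (Sum.inr ()))
      - (-(β * ∑ k0, (∏ j, pa (m (Sum.inl (Sum.inl j)))) *
            (pd (m (Sum.inl (Sum.inr k0))) *
              ∏ k ∈ Finset.univ.erase k0, pg (m (Sum.inl (Sum.inr k)))) *
            ps (m (Sum.inr ())))
        + γ * ((∏ j, pa (m (Sum.inl (Sum.inl j)))) *
            (∏ k, pg (m (Sum.inl (Sum.inr k)))) * ps (m (Sum.inr ())))
        + 3 * β * ((∏ j, pa (m (Sum.inl (Sum.inl j)))) *
            (∏ k, pg (m (Sum.inl (Sum.inr k)))) * pt (m (Sum.inr ()))))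
      = (∏ j, pa (m (Sum.inl (Sum.inl j)))) *
          ((∏ k, pc (m (Sum.inl (Sum.inr k)))) * pr (m (Sum.inr ()))
            - (ps (m (Sum.inr ())) * (-(β * Dsum l (fun k => m (Sum.inl (Sum.inr k))))
                + γ * ∏ k, pg (m (Sum.inl (Sum.inr k))))
              + 3 * β * (∏ k, pg (m (Sum.inl (Sum.inr k)))) * pt (m (Sum.inr ())))) := by
    have hsum2 : (∑ k0, (∏ j, pa (m (Sum.inl (Sum.inl j) : σt l))) *
          (pd (m (Sum.inl (Sum.inr k0))) *
            ∏ k ∈ Finset.univ.erase k0, pg (m (Sum.inl (Sum.inr k)))) *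
          ps (m (Sum.inr ())))
        = (∏ j, pa (m (Sum.inl (Sum.inl j)))) * ps (m (Sum.inr ())) *
            Dsum l (fun k => m (Sum.inl (Sum.inr k))) := by
      rw [Dsum, Finset.mul_sum]
      exact Finset.sum_congr rfl (fun k0 _ => by ring)
    rw [hsum2]
    ring
  rw [hfact]
  -- case analysis on the x-exponents
  by_cases hx : ∀ j : Fin 4, m (Sum.inl (Sum.inl j) : σt l) = 0
  · have hd : (∑ k, m (Sum.inl (Sum.inr k) : σt l)) + m (Sum.inr ()) = 4 := by
      rw [Finset.sum_eq_zero (fun j _ => hx j)] at hm4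
      omega
    rw [sub_eq_zero.mpr (key l (fun k => m (Sum.inl (Sum.inr k))) (m (Sum.inr ()))
      (Or.inl hd)), mul_zero]
  · push_neg at hx
    obtain ⟨j0, hj0⟩ := hx
    have h1 : m (Sum.inl (Sum.inl j0) : σt l) ≤ ∑ j, m (Sum.inl (Sum.inl j) : σt l) :=
      Finset.single_le_sum (f := fun j : Fin 4 => m (Sum.inl (Sum.inl j)))
        (fun i _ => Nat.zero_le _) (Finset.mem_univ j0)
    have hj4 : m (Sum.inl (Sum.inl j0) : σt l) ≤ 4 := by omega
    by_cases h4 : m (Sum.inl (Sum.inl j0) : σt l) = 4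
    · have hq0 : ∀ k, m (Sum.inl (Sum.inr k) : σt l) = 0 := by
        intro k
        have h2 : (∑ k, m (Sum.inl (Sum.inr k) : σt l)) = 0 := by omega
        exact (Finset.sum_eq_zero_iff).mp h2 k (Finset.mem_univ k)
      have hnu0 : m (Sum.inr () : σt l) = 0 := by omega
      rw [hnu0, sub_eq_zero.mpr (key l (fun k => m (Sum.inl (Sum.inr k))) 0
        (Or.inr ⟨hq0, rfl⟩)), mul_zero]
    · have hval : m (Sum.inl (Sum.inl j0) : σt l) = 1 ∨
          m (Sum.inl (Sum.inl j0) : σt l) = 2 ∨ m (Sum.inl (Sum.inl j0) : σt l) = 3 := by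
        omega
      have hpa0 : pa (m (Sum.inl (Sum.inl j0) : σt l)) = 0 := by
        rcases hval with h | h | h <;> rw [h]
        · exact pa1
        · exact pa2
        · exact pa3
      rw [Finset.prod_eq_zero (Finset.mem_univ j0) hpa0, zero_mul]
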